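/- Let (X₁, X₂) be a pair of identically distributed log-normal random variables, X₁ ≍ X₂ ~ LN(μ, σ²), and let S⁻ be their counter-monotonic sum. Then for every p ∈ (0,1), VaR_p[S⁻] = e^{μ + σ Φ^{-1}((1−p)/2)} + e^{μ + σ Φ^{-1}((1+p)/2)}, where Φ^{-1} is the inverse of the standard normal cdf. -/

import Mathlib

open MeasureTheory ProbabilityTheory Set

noncomputable section

variable {Ω : Type*} [MeasurableSpace Ω]

/-- The cumulative distribution function of the random variable `X` under `P`. -/
def rvCdf (P : Measure Ω) (X : Ω → ℝ) : ℝ → ℝ := fun x => (P {ω | X ω ≤ x}).toReal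

/-- The survival function `x ↦ P(X > x)`. -/
def rvSurv (P : Measure Ω) (X : Ω → ℝ) : ℝ → ℝ := fun x => (P {ω | x < X ω}).toReal

/-- The left inverse `F⁻¹(p) = inf {x | F x ≥ p}` of a cdf `F`. -/
def leftInv (F : ℝ → ℝ) (p : ℝ) : ℝ := sInf {x | p ≤ F x}

/-- The right inverse `F⁻¹⁺(p) = sup {x | F x ≤ p}` of a cdf `F`. -/
def rightInv (F : ℝ → ℝ) (p : ℝ) : ℝ := sSup {x | F x ≤ p}

/-- `g : [0,1] → [0,1]` is a distortion function: nondecreasing with `g 0 = 0`, `g 1 = 1`. -/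
def IsDistortion (g : ℝ → ℝ) : Prop :=
  MonotoneOn g (Icc 0 1) ∧ g 0 = 0 ∧ g 1 = 1 ∧ ∀ q ∈ Icc (0:ℝ) 1, g q ∈ Icc (0:ℝ) 1

/-- The dual distortion function `ḡ(q) = 1 - g(1 - q)`. -/
def dualDistortion (g : ℝ → ℝ) : ℝ → ℝ := fun q => 1 - g (1 - q)

/-- The distortion risk measure
`ρ_g[X] = -∫_{-∞}^0 (1 - g(P(X > x))) dx + ∫_0^∞ g(P(X > x)) dx`. -/
def rho (P : Measure Ω) (g : ℝ → ℝ) (X : Ω → ℝ) : ℝ :=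
  (- ∫ x in Iio (0:ℝ), (1 - g (rvSurv P X x))) + ∫ x in Ioi (0:ℝ), g (rvSurv P X x)

/-- The two integrals defining the distortion risk measure `ρ_g[X]` are finite. -/
def RhoFinite (P : Measure Ω) (g : ℝ → ℝ) (X : Ω → ℝ) : Prop :=
  IntegrableOn (fun x => 1 - g (rvSurv P X x)) (Iio (0:ℝ)) volume ∧
  IntegrableOn (fun x => g (rvSurv P X x)) (Ioi (0:ℝ)) volume

/-- `U` is uniformly distributed on `[0,1]`. -/
def IsUniform01 (P : Measure Ω) (U : Ω → ℝ) : Prop :=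
  Measurable U ∧ Measure.map U P = volume.restrict (Icc (0:ℝ) 1)

/-- The counter-monotonic sum `S⁻ = F_{X₁}⁻¹(U) + F_{X₂}⁻¹(1 - U)`. -/
def cmSum (P : Measure Ω) (X₁ X₂ : Ω → ℝ) (U : Ω → ℝ) : Ω → ℝ :=
  fun ω => leftInv (rvCdf P X₁) (U ω) + leftInv (rvCdf P X₂) (1 - U ω)

/-- `X` is symmetric: for some `m`, `P(X ≤ m - x) = P(X ≥ m + x)` for all `x`. -/
def IsSymmetricRV (P : Measure Ω) (X : Ω → ℝ) : Prop :=
  ∃ m : ℝ, ∀ x : ℝ, P {ω | X ω ≤ m - x} = P {ω | m + x ≤ X ω}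

/-- Dispersive order `X ≤_disp Y`. -/
def DispLE (P : Measure Ω) (X Y : Ω → ℝ) : Prop :=
  ∀ u v : ℝ, 0 < v → v ≤ u → u < 1 →
    leftInv (rvCdf P X) u - leftInv (rvCdf P X) v ≤
      leftInv (rvCdf P Y) u - leftInv (rvCdf P Y) v

/-- The cdf of `X` is continuous and strictly increasing on `(F⁻¹⁺(0), F⁻¹(1))`. -/
def CdfRegular (P : Measure Ω) (X : Ω → ℝ) : Prop :=
  ContinuousOn (rvCdf P X) (Ioo (rightInv (rvCdf P X) 0) (leftInv (rvCdf P X) 1)) ∧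
  StrictMonoOn (rvCdf P X) (Ioo (rightInv (rvCdf P X) 0) (leftInv (rvCdf P X) 1))

/-- Value-at-Risk `VaR_p[X] = F_X⁻¹(p)`. -/
def VaR (P : Measure Ω) (X : Ω → ℝ) (p : ℝ) : ℝ := leftInv (rvCdf P X) p

/-- Tail-Value-at-Risk `TVaR_p[X] = (1/(1-p)) ∫_p^1 F_X⁻¹(q) dq`. -/
def TVaR (P : Measure Ω) (X : Ω → ℝ) (p : ℝ) : ℝ :=
  (1 - p)⁻¹ * ∫ q in p..1, leftInv (rvCdf P X) q

/-- Left-Tail-Value-at-Risk `LTVaR_p[X] = (1/p) ∫_0^p F_X⁻¹(q) dq`. -/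
def LTVaR (P : Measure Ω) (X : Ω → ℝ) (p : ℝ) : ℝ :=
  p⁻¹ * ∫ q in (0:ℝ)..p, leftInv (rvCdf P X) q

/-- The standard normal cdf `Φ`. -/
def stdNormCdf : ℝ → ℝ := fun x => ((gaussianReal 0 1) (Iic x)).toReal

/-- The inverse `Φ⁻¹` of the standard normal cdf. -/
def stdNormInv : ℝ → ℝ := fun p => sInf {x | p ≤ stdNormCdf x}

/-- The Wang transform distortion function at level `p`. -/
def wangG (p : ℝ) : ℝ → ℝ := fun q => stdNormCdf (stdNormInv q + stdNormInv p)

/-- The Wang transform risk measure at level `p`. -/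
def WT (P : Measure Ω) (X : Ω → ℝ) (p : ℝ) : ℝ := rho P (wangG p) X

/-- `X ~ N(μ, σ²)`. -/
def IsNormalRV (P : Measure Ω) (X : Ω → ℝ) (μ σ : ℝ) : Prop :=
  Measurable X ∧ Measure.map X P = gaussianReal μ (⟨σ ^ 2, sq_nonneg σ⟩ : NNReal)

/-- `X ~ LN(μ, σ²)`, i.e. `X` is distributed as `exp Z` with `Z ~ N(μ, σ²)`. -/
def IsLogNormalRV (P : Measure Ω) (X : Ω → ℝ) (μ σ : ℝ) : Prop :=
  Measurable X ∧
    Measure.map X P = Measure.map Real.exp (gaussianReal μ (⟨σ ^ 2, sq_nonneg σ⟩ : NNReal))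

/-- `X ~ Student(ν)`: density proportional to `(1 + x²/ν)^(-(ν+1)/2)`. -/
def IsStudentRV (P : Measure Ω) (X : Ω → ℝ) (ν : ℝ) : Prop :=
  Measurable X ∧ ∃ c : ℝ, 0 < c ∧
    Measure.map X P =
      volume.withDensity (fun x => ENNReal.ofReal (c * (1 + x ^ 2 / ν) ^ (-((ν + 1) / 2))))

/-- Extension of a distortion function to `ℝ` by constants. -/
def gExt (g : ℝ → ℝ) : ℝ → ℝ := fun q => if q ≤ 0 then 0 else if 1 ≤ q then 1 else g q

open Classical in
/-- The Lebesgue–Stieltjes measure `dg` associated with (the right-continuous modification of)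
the extension of a distortion function `g` to `ℝ`. -/
def lsMeasure (g : ℝ → ℝ) : Measure ℝ :=
  if h : Monotone (gExt g) then h.stieltjesFunction.measure else 0


section Aux

open Real Filter Topology

lemma stdNormCdf_eq' (x : ℝ) : stdNormCdf x = ((gaussianReal 0 1) (Iic x)).toReal := rfl

lemma stdNormCdf_mono : Monotone stdNormCdf := fun a b hab =>
  ENNReal.toReal_mono (measure_ne_top _ _) (measure_mono (Iic_subset_Iic.2 hab))

lemma gauss_Iic_add (a b : ℝ) (hab : a ≤ b) :
    (gaussianReal 0 1) (Iic b) = (gaussianReal 0 1) (Iic a) + (gaussianReal 0 1) (Ioc a b) := by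
  rw [← Iic_union_Ioc_eq_Iic hab,
    measure_union (Iic_disjoint_Ioc le_rfl) measurableSet_Ioc]

lemma gaussianPDFReal_le_one (x : ℝ) : gaussianPDFReal 0 1 x ≤ 1 := by
  rw [gaussianPDFReal]
  have h1 : (1 : ℝ) ≤ Real.sqrt (2 * π * (1 : NNReal)) := by
    rw [Real.one_le_sqrt]
    push_cast
    nlinarith [Real.pi_gt_three]
  have h2 : Real.exp (-(x - 0) ^ 2 / (2 * (1 : NNReal))) ≤ 1 := by
    rw [Real.exp_le_one_iff]
    push_cast
    refine div_nonpos_of_nonpos_of_nonneg (neg_nonpos.mpr (sq_nonneg _)) (by norm_num)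
  have h3 : (Real.sqrt (2 * π * (1 : NNReal)))⁻¹ ≤ 1 := by
    rw [inv_le_one_iff₀]
    right; exact h1
  have h4 : 0 ≤ Real.exp (-(x - 0) ^ 2 / (2 * (1 : NNReal))) := Real.exp_nonneg _
  nlinarith

lemma gauss_Ioc_le (a b : ℝ) : (gaussianReal 0 1) (Ioc a b) ≤ ENNReal.ofReal (b - a) := by
  rw [gaussianReal_apply _ one_ne_zero, ← Real.volume_Ioc]
  calc ∫⁻ x in Ioc a b, gaussianPDF 0 1 x ≤ ∫⁻ _ in Ioc a b, 1 := by
        refine lintegral_mono fun x => ?_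
        rw [gaussianPDF]
        calc ENNReal.ofReal (gaussianPDFReal 0 1 x) ≤ ENNReal.ofReal 1 :=
              ENNReal.ofReal_le_ofReal (gaussianPDFReal_le_one x)
        _ = 1 := ENNReal.ofReal_one
  _ = volume (Ioc a b) := setLIntegral_one _

lemma gauss_Ioc_pos (a b : ℝ) (h : a < b) : 0 < (gaussianReal 0 1) (Ioc a b) := by
  rw [pos_iff_ne_zero]
  intro h0
  have hvol := gaussianReal_absolutelyContinuous' 0 one_ne_zero h0
  rw [Real.volume_Ioc] at hvol
  simp only [ENNReal.ofReal_eq_zero] at hvol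
  linarith

lemma stdNormCdf_strictMono : StrictMono stdNormCdf := by
  intro a b hab
  have h := gauss_Iic_add a b hab.le
  have hpos : 0 < ((gaussianReal 0 1) (Ioc a b)).toReal :=
    ENNReal.toReal_pos (gauss_Ioc_pos a b hab).ne' (measure_ne_top _ _)
  rw [stdNormCdf_eq', stdNormCdf_eq', h,
    ENNReal.toReal_add (measure_ne_top _ _) (measure_ne_top _ _)]
  linarith

lemma stdNormCdf_sub_le (a b : ℝ) (hab : a ≤ b) : stdNormCdf b - stdNormCdf a ≤ b - a := by
  rw [stdNormCdf_eq', stdNormCdf_eq', gauss_Iic_add a b hab,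
    ENNReal.toReal_add (measure_ne_top _ _) (measure_ne_top _ _)]
  have h2 : ((gaussianReal 0 1) (Ioc a b)).toReal ≤ b - a := by
    have := ENNReal.toReal_mono ENNReal.ofReal_ne_top (gauss_Ioc_le a b)
    rwa [ENNReal.toReal_ofReal (by linarith)] at this
  linarith

lemma stdNormCdf_continuous : Continuous stdNormCdf := by
  have : LipschitzWith 1 stdNormCdf := by
    refine LipschitzWith.of_dist_le_mul fun x y => ?_
    rw [NNReal.coe_one, one_mul, Real.dist_eq, Real.dist_eq]
    have key : ∀ a b : ℝ, a ≤ b → |stdNormCdf a - stdNormCdf b| ≤ |a - b| := by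
      intro a b h
      have h1 := stdNormCdf_sub_le a b h
      have h2 := stdNormCdf_mono h
      rw [abs_sub_comm (stdNormCdf a), abs_of_nonneg (sub_nonneg.2 h2), abs_sub_comm a,
        abs_of_nonneg (sub_nonneg.2 h)]
      linarith
    rcases le_total x y with h | h
    · exact key x y h
    · rw [abs_sub_comm, abs_sub_comm x y]
      exact key y x h
  exact this.continuous

lemma gauss_singleton (x : ℝ) : (gaussianReal 0 1) {x} = 0 :=
  gaussianReal_absolutelyContinuous 0 one_ne_zero (Real.volume_singleton)

lemma gauss_map_neg : Measure.map (fun x : ℝ => -x) (gaussianReal 0 1) = gaussianReal 0 1 := by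
  have hf : (fun x : ℝ => -x) = fun x : ℝ => (-1 : ℝ) * x := by funext x; ring
  rw [hf, gaussianReal_map_const_mul]
  norm_num

lemma stdNormCdf_neg (x : ℝ) : stdNormCdf (-x) = 1 - stdNormCdf x := by
  have h1 : (gaussianReal 0 1) (Iic (-x)) = (gaussianReal 0 1) (Ici x) := by
    conv_lhs => rw [← gauss_map_neg]
    rw [Measure.map_apply measurable_neg measurableSet_Iic]
    congr 1
    ext y
    simp
  have h2 : (gaussianReal 0 1) (Ici x) = 1 - (gaussianReal 0 1) (Iic x) := by
    have hIic : (gaussianReal 0 1) (Iio x) = (gaussianReal 0 1) (Iic x) :=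
      measure_congr (Iio_ae_eq_Iic' (gauss_singleton x))
    rw [← compl_Iio, measure_compl measurableSet_Iio (measure_ne_top _ _), measure_univ, hIic]
  rw [stdNormCdf_eq', stdNormCdf_eq', h1, h2,
    ENNReal.toReal_sub_of_le prob_le_one ENNReal.one_ne_top, ENNReal.toReal_one]

lemma stdNormCdf_zero : stdNormCdf 0 = 1 / 2 := by
  have := stdNormCdf_neg 0
  rw [neg_zero] at this
  linarith

lemma stdNormCdf_tendsto_atTop : Tendsto stdNormCdf atTop (𝓝 1) := by
  have h := tendsto_measure_Iic_atTop (gaussianReal 0 1)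
  rw [measure_univ] at h
  have h2 := (ENNReal.tendsto_toReal (ENNReal.one_ne_top)).comp h
  exact h2

lemma stdNormCdf_tendsto_atBot : Tendsto stdNormCdf atBot (𝓝 0) := by
  have hrw : stdNormCdf = fun x => 1 - stdNormCdf (-x) := by
    funext x
    have := stdNormCdf_neg (-x)
    rw [neg_neg] at this
    linarith
  rw [hrw]
  have h1 : Tendsto (fun x : ℝ => stdNormCdf (-x)) atBot (𝓝 1) :=
    stdNormCdf_tendsto_atTop.comp tendsto_neg_atBot_atTop
  have h2 := (tendsto_const_nhds (x := (1:ℝ)) (f := atBot)).sub h1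
  simpa using h2

lemma stdNormCdf_exists_lt {p : ℝ} (hp : 0 < p) : ∃ a, stdNormCdf a < p :=
  (stdNormCdf_tendsto_atBot.eventually (eventually_lt_nhds hp)).exists

lemma stdNormCdf_exists_ge {p : ℝ} (hp : p < 1) : ∃ b, p ≤ stdNormCdf b :=
  (stdNormCdf_tendsto_atTop.eventually (eventually_ge_nhds hp)).exists

lemma stdNormInv_set_nonempty {p : ℝ} (hp : p < 1) : {x | p ≤ stdNormCdf x}.Nonempty :=
  stdNormCdf_exists_ge hp

lemma stdNormInv_set_bddBelow {p : ℝ} (hp : 0 < p) : BddBelow {x | p ≤ stdNormCdf x} := by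
  obtain ⟨a, ha⟩ := stdNormCdf_exists_lt hp
  refine ⟨a, fun x hx => ?_⟩
  by_contra hax
  push_neg at hax
  exact absurd hx (not_le.2 (lt_of_le_of_lt (stdNormCdf_mono hax.le) ha))

lemma stdNormCdf_stdNormInv {p : ℝ} (hp : p ∈ Ioo (0:ℝ) 1) :
    stdNormCdf (stdNormInv p) = p := by
  have hbdd := stdNormInv_set_bddBelow hp.1
  have hne := stdNormInv_set_nonempty hp.2
  have hcl : IsClosed {x | p ≤ stdNormCdf x} := isClosed_le continuous_const stdNormCdf_continuous
  have hmem : stdNormInv p ∈ {x | p ≤ stdNormCdf x} := hcl.csInf_mem hne hbdd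
  refine le_antisymm ?_ hmem
  by_contra hgt
  push_neg at hgt
  have hEv : ∀ᶠ x in 𝓝 (stdNormInv p), p < stdNormCdf x :=
    (stdNormCdf_continuous.continuousAt).eventually (eventually_gt_nhds hgt)
  have hEv2 : ∀ᶠ x in 𝓝[<] (stdNormInv p), p < stdNormCdf x ∧ x < stdNormInv p :=
    ((hEv.filter_mono nhdsWithin_le_nhds).and self_mem_nhdsWithin)
  obtain ⟨x, hx1, hx2⟩ := hEv2.exists
  exact absurd (csInf_le hbdd (le_of_lt hx1)) (not_le.2 hx2)

lemma le_stdNormCdf_iff {p x : ℝ} (hp : p ∈ Ioo (0:ℝ) 1) :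
    p ≤ stdNormCdf x ↔ stdNormInv p ≤ x := by
  constructor
  · exact fun h => csInf_le (stdNormInv_set_bddBelow hp.1) h
  · intro h
    calc p = stdNormCdf (stdNormInv p) := (stdNormCdf_stdNormInv hp).symm
    _ ≤ stdNormCdf x := stdNormCdf_mono h

lemma stdNormInv_mono {p q : ℝ} (hp : p ∈ Ioo (0:ℝ) 1) (hq : q ∈ Ioo (0:ℝ) 1)
    (hpq : p ≤ q) : stdNormInv p ≤ stdNormInv q := by
  rw [← le_stdNormCdf_iff hp, stdNormCdf_stdNormInv hq]
  exact hpq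

lemma stdNormInv_strictMono {p q : ℝ} (hp : p ∈ Ioo (0:ℝ) 1) (hq : q ∈ Ioo (0:ℝ) 1)
    (hpq : p < q) : stdNormInv p < stdNormInv q := by
  rcases lt_or_ge (stdNormInv p) (stdNormInv q) with h | h
  · exact h
  · exfalso
    have := stdNormCdf_mono h
    rw [stdNormCdf_stdNormInv hp, stdNormCdf_stdNormInv hq] at this
    linarith

lemma stdNormInv_one_sub {p : ℝ} (hp : p ∈ Ioo (0:ℝ) 1) :
    stdNormInv (1 - p) = - stdNormInv p := by
  have h1p : (1 - p) ∈ Ioo (0:ℝ) 1 := ⟨by linarith [hp.2], by linarith [hp.1]⟩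
  refine stdNormCdf_strictMono.injective ?_
  rw [stdNormCdf_stdNormInv h1p, stdNormCdf_neg, stdNormCdf_stdNormInv hp]

lemma stdNormInv_pos {v : ℝ} (hv : v ∈ Ioo (0:ℝ) 1) (hv2 : 1 / 2 < v) :
    0 < stdNormInv v := by
  by_contra h
  push_neg at h
  have := stdNormCdf_mono h
  rw [stdNormCdf_stdNormInv hv, stdNormCdf_zero] at this
  linarith

end Aux

section Aux2

open Real Filter Topology

lemma gauss_affine (μ σ : ℝ) (hσ : 0 < σ) :
    gaussianReal μ (⟨σ ^ 2, sq_nonneg σ⟩ : NNReal) =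
      Measure.map (fun t : ℝ => σ * t + μ) (gaussianReal 0 1) := by
  have h1 := gaussianReal_map_const_mul (μ := 0) (v := 1) σ
  rw [mul_zero, mul_one] at h1
  have hcomp : (fun t : ℝ => σ * t + μ) = (fun t : ℝ => t + μ) ∘ (fun t : ℝ => σ * t) := rfl
  rw [hcomp, ← Measure.map_map (measurable_add_const μ) (measurable_const_mul σ), h1,
    gaussianReal_map_add_const, zero_add]
  rfl

variable {Ω : Type*} [MeasurableSpace Ω]

lemma rvCdf_map (P : Measure Ω) {X : Ω → ℝ} (hX : Measurable X) (x : ℝ) :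
    rvCdf P X x = ((Measure.map X P) (Iic x)).toReal := by
  rw [rvCdf, Measure.map_apply hX measurableSet_Iic]
  rfl

lemma lognormal_cdf (P : Measure Ω) {X : Ω → ℝ} {μ σ : ℝ} (hσ : 0 < σ)
    (hX : IsLogNormalRV P X μ σ) (x : ℝ) (hx : 0 < x) :
    rvCdf P X x = stdNormCdf ((Real.log x - μ) / σ) := by
  rw [rvCdf_map P hX.1, hX.2, Measure.map_apply Real.measurable_exp measurableSet_Iic]
  have hpre : Real.exp ⁻¹' Iic x = Iic (Real.log x) := by
    ext y
    simp only [mem_preimage, mem_Iic]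
    exact (Real.le_log_iff_exp_le hx).symm
  rw [hpre, gauss_affine μ σ hσ,
    Measure.map_apply ((measurable_const_mul σ).add_const μ) measurableSet_Iic]
  have hpre2 : (fun t : ℝ => σ * t + μ) ⁻¹' Iic (Real.log x) = Iic ((Real.log x - μ) / σ) := by
    ext t
    simp only [mem_preimage, mem_Iic]
    rw [le_div_iff₀ hσ]
    constructor <;> intro <;> nlinarith
  rw [hpre2]
  rfl

lemma lognormal_cdf_nonpos (P : Measure Ω) {X : Ω → ℝ} {μ σ : ℝ}
    (hX : IsLogNormalRV P X μ σ) (x : ℝ) (hx : x ≤ 0) :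
    rvCdf P X x = 0 := by
  rw [rvCdf_map P hX.1, hX.2, Measure.map_apply Real.measurable_exp measurableSet_Iic]
  have hpre : Real.exp ⁻¹' Iic x = ∅ := by
    ext y
    simp only [mem_preimage, mem_Iic, mem_empty_iff_false, iff_false, not_le]
    exact lt_of_le_of_lt hx (Real.exp_pos y)
  rw [hpre]
  simp

lemma lognormal_leftInv (P : Measure Ω) [IsProbabilityMeasure P] {X : Ω → ℝ} {μ σ : ℝ}
    (hσ : 0 < σ) (hX : IsLogNormalRV P X μ σ) {u : ℝ} (hu : u ∈ Ioo (0:ℝ) 1) :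
    leftInv (rvCdf P X) u = Real.exp (μ + σ * stdNormInv u) := by
  have hset : {x | u ≤ rvCdf P X x} = Ici (Real.exp (μ + σ * stdNormInv u)) := by
    ext x
    simp only [mem_setOf_eq, mem_Ici]
    constructor
    · intro h
      rcases le_or_gt x 0 with hx | hx
      · rw [lognormal_cdf_nonpos P hX x hx] at h
        linarith [hu.1]
      · rw [lognormal_cdf P hσ hX x hx, le_stdNormCdf_iff hu, le_div_iff₀ hσ] at h
        rw [← Real.le_log_iff_exp_le hx]
        nlinarith
    · intro h
      have hx : 0 < x := lt_of_lt_of_le (Real.exp_pos _) h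
      rw [lognormal_cdf P hσ hX x hx, le_stdNormCdf_iff hu, le_div_iff₀ hσ]
      rw [← Real.le_log_iff_exp_le hx] at h
      nlinarith
  rw [leftInv, hset, csInf_Ici]

end Aux2

/-- VaR of the counter-monotonic sum of two identically distributed
log-normal risks. -/
theorem lognormal_cm_sum_VaR
    (P : Measure Ω) [IsProbabilityMeasure P]
    (X₁ X₂ U : Ω → ℝ) (μ σ : ℝ) (hσ : 0 < σ)
    (h₁ : IsLogNormalRV P X₁ μ σ) (h₂ : IsLogNormalRV P X₂ μ σ)
    (hU : IsUniform01 P U)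
    (p : ℝ) (hp : p ∈ Ioo (0:ℝ) 1) :
    VaR P (cmSum P X₁ X₂ U) p =
      Real.exp (μ + σ * stdNormInv ((1 - p) / 2)) +
        Real.exp (μ + σ * stdNormInv ((1 + p) / 2)) := by
  obtain ⟨hp0, hp1⟩ := hp
  have hv : (1 + p) / 2 ∈ Ioo (0:ℝ) 1 := ⟨by linarith, by linarith⟩
  have hw : (1 - p) / 2 ∈ Ioo (0:ℝ) 1 := ⟨by linarith, by linarith⟩
  set v : ℝ := (1 + p) / 2 with hvdef
  set w : ℝ := (1 - p) / 2 with hwdef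
  have hwv : w = 1 - v := by rw [hvdef, hwdef]; ring
  set b := stdNormInv v with hbdef
  have hb : 0 < b := stdNormInv_pos hv (by rw [hvdef]; linarith)
  have hψw : stdNormInv w = -b := by rw [hwv, stdNormInv_one_sub hv]
  set s := Real.exp (μ + σ * stdNormInv w) + Real.exp (μ + σ * stdNormInv v) with hsdef
  set c : ℝ → ℝ := fun t => Real.exp (μ + σ * t) + Real.exp (μ - σ * t) with hcdef
  have hsc : s = c b := by
    rw [hsdef, hψw, hcdef]
    have h1 : μ + σ * -b = μ - σ * b := by ring
    rw [h1, add_comm]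
  have hc_mono : ∀ a t : ℝ, 0 ≤ a → a ≤ t → c a ≤ c t := by
    intro a t ha hat
    have e1 : Real.exp (μ + σ * t) = Real.exp (σ * (t - a)) * Real.exp (μ + σ * a) := by
      rw [← Real.exp_add]; ring_nf
    have e2 : Real.exp (μ - σ * a) = Real.exp (σ * (t - a)) * Real.exp (μ - σ * t) := by
      rw [← Real.exp_add]; ring_nf
    have hE : 1 ≤ Real.exp (σ * (t - a)) :=
      Real.one_le_exp (by nlinarith)
    have hXY : Real.exp (μ - σ * t) ≤ Real.exp (μ + σ * a) :=
      Real.exp_le_exp.2 (by nlinarith)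
    simp only [hcdef]
    rw [e1, e2]
    nlinarith [mul_nonneg (sub_nonneg.2 hE) (sub_nonneg.2 hXY)]
  have hc_cont : Continuous c := by
    simp only [hcdef]
    fun_prop
  have hcdf2 : rvCdf P X₂ = rvCdf P X₁ := by
    funext x
    rw [rvCdf_map P h₂.1, rvCdf_map P h₁.1, h₁.2, h₂.2]
  set Q := leftInv (rvCdf P X₁) with hQdef
  have hS : ∀ ω, cmSum P X₁ X₂ U ω = Q (U ω) + Q (1 - U ω) := by
    intro ω
    simp only [cmSum, hcdf2, hQdef]
  have hg : ∀ u : ℝ, u ∈ Ioo (0:ℝ) 1 → Q u + Q (1 - u) = c (stdNormInv u) := by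
    intro u hu
    have hu' : 1 - u ∈ Ioo (0:ℝ) 1 := ⟨by linarith [hu.2], by linarith [hu.1]⟩
    rw [hQdef, lognormal_leftInv P hσ h₁ hu, lognormal_leftInv P hσ h₁ hu',
      stdNormInv_one_sub hu]
    simp only [hcdef]
    have h1 : μ + σ * -stdNormInv u = μ - σ * stdNormInv u := by ring
    rw [h1]
  have hceven : ∀ t : ℝ, c |t| = c t := by
    intro t
    rcases abs_cases t with ⟨h, _⟩ | ⟨h, _⟩
    · rw [h]
    · rw [h]
      simp only [hcdef]
      have h1 : μ + σ * -t = μ - σ * t := by ring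
      have h2 : μ - σ * -t = μ + σ * t := by ring
      rw [h1, h2, add_comm]
  have hPU : ∀ B : Set ℝ, MeasurableSet B → P (U ⁻¹' B) = volume (B ∩ Icc 0 1) := by
    intro B hB
    rw [← Measure.map_apply hU.1 hB, hU.2, Measure.restrict_apply hB]
  -- lower bound : p ≤ F_S s
  have hFs : p ≤ rvCdf P (cmSum P X₁ X₂ U) s := by
    have hsub : U ⁻¹' (Icc w v) ⊆ {ω | cmSum P X₁ X₂ U ω ≤ s} := by
      intro ω hω
      have hω' : w ≤ U ω ∧ U ω ≤ v := hω
      have hu : U ω ∈ Ioo (0:ℝ) 1 :=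
        ⟨lt_of_lt_of_le hw.1 hω'.1, lt_of_le_of_lt hω'.2 hv.2⟩
      simp only [mem_setOf_eq]
      rw [hS ω, hg _ hu, hsc, ← hceven (stdNormInv (U ω))]
      refine hc_mono _ _ (abs_nonneg _) ?_
      rw [abs_le]
      refine ⟨?_, ?_⟩
      · rw [← hψw]
        exact stdNormInv_mono hw hu hω'.1
      · exact stdNormInv_mono hu hv hω'.2
    have h1 : P (U ⁻¹' Icc w v) = ENNReal.ofReal p := by
      rw [hPU _ measurableSet_Icc,
        inter_eq_self_of_subset_left (Icc_subset_Icc (le_of_lt hw.1) (le_of_lt hv.2)),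
        Real.volume_Icc]
      congr 1
      rw [hvdef, hwdef]; ring
    have h2 := measure_mono (μ := P) hsub
    rw [h1] at h2
    have h3 := ENNReal.toReal_mono (measure_ne_top P _) h2
    rwa [ENNReal.toReal_ofReal (le_of_lt hp0)] at h3
  -- upper bound : F_S x < p for x < s
  have hFx : ∀ x : ℝ, x < s → rvCdf P (cmSum P X₁ X₂ U) x < p := by
    intro x hx
    rw [hsc] at hx
    have hEv : ∀ᶠ t in nhds b, x < c t := hc_cont.continuousAt.eventually (eventually_gt_nhds hx)
    have hEv0 : ∀ᶠ t in nhds b, 0 < t := eventually_gt_nhds hb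
    have hEv2 : ∀ᶠ t in nhdsWithin b (Iio b), (x < c t ∧ 0 < t) ∧ t < b :=
      ((hEv.and hEv0).filter_mono nhdsWithin_le_nhds).and eventually_mem_nhdsWithin
    obtain ⟨t', ⟨ht'x, ht'0⟩, ht'b⟩ := hEv2.exists
    set v' := stdNormCdf t' with hv'def
    have hv'v : v' < v := by
      have h5 := stdNormCdf_strictMono ht'b
      rwa [hbdef, stdNormCdf_stdNormInv hv] at h5
    have hv'half : 1/2 < v' := by
      have h5 := stdNormCdf_strictMono ht'0
      rwa [stdNormCdf_zero] at h5
    have hsub : {ω | cmSum P X₁ X₂ U ω ≤ x} ⊆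
        U ⁻¹' (Icc (1 - v') v') ∪ U ⁻¹' ((Ioo (0:ℝ) 1)ᶜ) := by
      intro ω hω
      by_cases hu : U ω ∈ Ioo (0:ℝ) 1
      · refine mem_union_left _ ?_
        simp only [mem_setOf_eq] at hω
        rw [hS ω, hg _ hu] at hω
        have habs : |stdNormInv (U ω)| < t' := by
          by_contra hcon
          push_neg at hcon
          have h6 := hc_mono t' _ (le_of_lt ht'0) hcon
          rw [hceven] at h6
          linarith
        rw [abs_lt] at habs
        have hmem1 : stdNormCdf (-t') ≤ stdNormCdf (stdNormInv (U ω)) :=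
          stdNormCdf_mono (le_of_lt habs.1)
        have hmem2 : stdNormCdf (stdNormInv (U ω)) ≤ stdNormCdf t' :=
          stdNormCdf_mono (le_of_lt habs.2)
        rw [stdNormCdf_neg, stdNormCdf_stdNormInv hu] at hmem1
        rw [stdNormCdf_stdNormInv hu] at hmem2
        exact mem_preimage.2 (mem_Icc.2 ⟨by linarith, hmem2⟩)
      · exact mem_union_right _ hu
    have hB2 : P (U ⁻¹' ((Ioo (0:ℝ) 1)ᶜ)) = 0 := by
      rw [hPU _ measurableSet_Ioo.compl]
      refine measure_mono_null (fun y hy => ?_) (?_ : volume ({0,1} : Set ℝ) = 0)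
      · have hy1 : y ∈ (Ioo (0:ℝ) 1)ᶜ := hy.1
        have hy2 : (0:ℝ) ≤ y ∧ y ≤ 1 := hy.2
        simp only [mem_compl_iff, mem_Ioo, not_and_or, not_lt] at hy1
        simp only [mem_insert_iff, mem_singleton_iff]
        rcases hy1 with h | h
        · left; linarith [hy2.1]
        · right; linarith [hy2.2]
      · have : ({0,1} : Set ℝ) = {(0:ℝ)} ∪ {1} := rfl
        rw [this]
        exact measure_union_null Real.volume_singleton Real.volume_singleton
    have hle : P {ω | cmSum P X₁ X₂ U ω ≤ x} ≤ ENNReal.ofReal (v' - (1 - v')) := by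
      calc P {ω | cmSum P X₁ X₂ U ω ≤ x}
          ≤ P (U ⁻¹' Icc (1 - v') v' ∪ U ⁻¹' ((Ioo (0:ℝ) 1)ᶜ)) := measure_mono hsub
        _ ≤ P (U ⁻¹' Icc (1 - v') v') + P (U ⁻¹' ((Ioo (0:ℝ) 1)ᶜ)) := measure_union_le _ _
        _ = P (U ⁻¹' Icc (1 - v') v') := by rw [hB2, add_zero]
        _ = volume (Icc (1 - v') v' ∩ Icc 0 1) := hPU _ measurableSet_Icc
        _ ≤ volume (Icc (1 - v') v') := measure_mono inter_subset_left
        _ = ENNReal.ofReal (v' - (1 - v')) := Real.volume_Icc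
    have h7 := ENNReal.toReal_mono ENNReal.ofReal_ne_top hle
    rw [ENNReal.toReal_ofReal (by linarith)] at h7
    have h8 : rvCdf P (cmSum P X₁ X₂ U) x ≤ v' - (1 - v') := h7
    have h9 : v' - (1 - v') < p := by rw [hvdef] at hv'v; linarith
    linarith
  -- conclude
  rw [VaR, leftInv]
  have hmem : s ∈ {x | p ≤ rvCdf P (cmSum P X₁ X₂ U) x} := hFs
  have hlb : ∀ x ∈ {x | p ≤ rvCdf P (cmSum P X₁ X₂ U) x}, s ≤ x := by
    intro x hx
    by_contra h
    push_neg at h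
    exact absurd hx (not_le.2 (hFx x h))
  exact le_antisymm (csInf_le ⟨s, hlb⟩ hmem) (le_csInf ⟨s, hmem⟩ hlb)


end
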